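/- If G is a complete multipartite graph in which every part has at most 4 vertices, then any subset of V(G) of size at least 7 induces a non-planar subgraph. -/
import Mathlib


open SimpleGraph

/-- `H` is a minor of `G`: there are nonempty, connected, pairwise disjoint branch sets. -/
def HasMinor {V W : Type} (G : SimpleGraph V) (H : SimpleGraph W) : Prop :=
  ∃ f : W → Set V,
    (∀ w, (f w).Nonempty) ∧
    (∀ w, (G.induce (f w)).Connected) ∧
    (Pairwise fun w₁ w₂ => Disjoint (f w₁) (f w₂)) ∧
    (∀ w₁ w₂, H.Adj w₁ w₂ → ∃ v₁ ∈ f w₁, ∃ v₂ ∈ f w₂, G.Adj v₁ v₂)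

/-- Planarity via Wagner's theorem: no `K₅` minor and no `K₃,₃` minor. -/
def IsPlanar {V : Type} (G : SimpleGraph V) : Prop :=
  ¬ HasMinor G (completeGraph (Fin 5)) ∧
  ¬ HasMinor G (completeBipartiteGraph (Fin 3) (Fin 3))

/-- The point-thickness: the least `k` such that the vertices can be partitioned into `k`
classes each inducing a planar subgraph. -/
noncomputable def pointThickness {V : Type} (G : SimpleGraph V) : ℕ :=
  sInf {k | ∃ P : V → Fin k, ∀ i, IsPlanar (G.induce {v | P v = i})}

/-- The complete multipartite graph with part sizes `c i`. -/
def KMulti {ι : Type} (c : ι → ℕ) : SimpleGraph (Σ i, Fin (c i)) :=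
  completeMultipartiteGraph fun i => Fin (c i)

/-- `G` contains `H` as a subgraph. -/
def ContainsSub {V W : Type} (G : SimpleGraph V) (H : SimpleGraph W) : Prop :=
  ∃ f : H →g G, Function.Injective f

/-- Part sizes of `K_{1^{k1}, 2^{k2}, 3^{k3}, p 0, …, p (n-1)}`. -/
def sizes (k1 k2 k3 n : ℕ) (p : ℕ → ℕ) : Fin k1 ⊕ Fin k2 ⊕ Fin k3 ⊕ Fin n → ℕ :=
  Sum.elim (fun _ => 1) (Sum.elim (fun _ => 2) (Sum.elim (fun _ => 3) (fun i => p i.1)))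

/-- The complete multipartite graph `K_{1^{k1}, 2^{k2}, 3^{k3}, p 0, …, p (n-1)}`. -/
def Gmulti (k1 k2 k3 n : ℕ) (p : ℕ → ℕ) :=
  KMulti (sizes k1 k2 k3 n p)

/-- The function `N(k₁,k₂)` from the paper (`⌈·⌉`, `⌊·⌋` are ceiling/floor of rationals,
implemented with natural-number division; note `a - 3*b ≥ 0` in the first branch and
`⌊a/3⌋ ≤ b` in the second). -/
def Nfun (a b : ℕ) : ℕ :=
  if 3 * b ≤ a then b + (a - 3 * b + 3) / 4
  else a / 3 + (b - a / 3) / 3 +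
    (if a % 3 = 0 ∧ (b - a / 3) % 3 = 0 then 0
     else if a % 3 = 2 ∧ (b - a / 3) % 3 = 2 then 2 else 1)

open Finset in
lemma minor_of_inj {V W : Type} {G : SimpleGraph V} {H : SimpleGraph W}
    (g : W → V) (hg : Function.Injective g)
    (hadj : ∀ a b, H.Adj a b → G.Adj (g a) (g b)) : HasMinor G H := by
  refine ⟨fun w => {g w}, fun w => ⟨g w, rfl⟩, ?_, ?_, ?_⟩
  · intro w
    have : Nonempty ({g w} : Set V) := ⟨⟨g w, rfl⟩⟩
    constructor
    intro u v
    have : u = v := Subsingleton.elim u v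
    rw [this]
  · intro w₁ w₂ hne
    simp only [Set.disjoint_singleton_left, Set.mem_singleton_iff]
    exact fun h => hne (hg h)
  · intro w₁ w₂ h
    exact ⟨g w₁, rfl, g w₂, rfl, hadj _ _ h⟩


open Finset in
lemma fiber_card {ι : Type} (V : ι → Type) [∀ i, Fintype (V i)]
    (hp : ∀ i, Fintype.card (V i) ≤ 4) (s : Finset (Σ i, V i)) [DecidableEq ι] (i : ι) :
    (s.filter (fun x => x.1 = i)).card ≤ 4 := by
  classical
  have hsub : s.filter (fun x => x.1 = i) ⊆ Finset.univ.image (Sigma.mk i) := by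
    intro x hx
    simp only [mem_filter] at hx
    obtain ⟨j, v⟩ := x
    obtain rfl : j = i := hx.2
    exact mem_image.mpr ⟨v, mem_univ _, rfl⟩
  calc (s.filter (fun x => x.1 = i)).card ≤ (Finset.univ.image (Sigma.mk i)).card :=
        card_le_card hsub
    _ ≤ (Finset.univ : Finset (V i)).card := card_image_le
    _ ≤ 4 := by simpa using hp i

open Finset in
lemma exists_split {ι : Type} (V : ι → Type) [∀ i, Fintype (V i)]
    (hp : ∀ i, Fintype.card (V i) ≤ 4) (s : Finset (Σ i, V i)) (hs : 7 ≤ s.card) :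
    ∃ A ⊆ s, 3 ≤ A.card ∧ A.card + 3 ≤ s.card ∧
      ∀ a ∈ A, ∀ b ∈ s, b ∉ A → a.1 ≠ b.1 := by
  classical
  -- part-closed sets of the form s.filter (Q ∘ fst) automatically satisfy last condition
  have closed : ∀ (Q : ι → Prop) [DecidablePred Q],
      ∀ a ∈ s.filter (fun x => Q x.1), ∀ b ∈ s, b ∉ s.filter (fun x => Q x.1) → a.1 ≠ b.1 := by
    intro Q _ a ha b hb hb' hab
    simp only [mem_filter] at ha
    exact hb' (mem_filter.mpr ⟨hb, hab ▸ ha.2⟩)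
  by_cases hbig : ∃ i, 3 ≤ (s.filter (fun x => x.1 = i)).card
  · obtain ⟨i, hi⟩ := hbig
    refine ⟨s.filter (fun x => x.1 = i), filter_subset _ _, hi, ?_, closed (fun j => j = i)⟩
    have := fiber_card V hp s i
    omega
  · push_neg at hbig
    have h0 : s.Nonempty := card_pos.mp (by omega)
    obtain ⟨a, ha⟩ := h0
    have h1 : (s.filter (fun x => ¬ x.1 = a.1)).Nonempty := by
      rw [← card_pos]
      have h := card_filter_add_card_filter_not (s := s) (p := fun x => x.1 = a.1)
      have := hbig a.1
      omega
    obtain ⟨b, hb⟩ := h1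
    rw [mem_filter] at hb
    have hAB2 : (s.filter (fun x => x.1 = a.1 ∨ x.1 = b.1)).card ≤ 4 := by
      rw [filter_or]
      calc _ ≤ (s.filter (fun x => x.1 = a.1)).card + (s.filter (fun x => x.1 = b.1)).card :=
            card_union_le _ _
        _ ≤ 4 := by have := hbig a.1; have := hbig b.1; omega
    by_cases h2 : 3 ≤ (s.filter (fun x => x.1 = a.1 ∨ x.1 = b.1)).card
    · exact ⟨_, filter_subset _ _, h2, by omega, closed (fun j => j = a.1 ∨ j = b.1)⟩
    · push_neg at h2
      have hc : (s \ s.filter (fun x => x.1 = a.1 ∨ x.1 = b.1)).Nonempty := by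
        rw [← card_pos, card_sdiff_of_subset (filter_subset _ _)]
        omega
      obtain ⟨c, hc⟩ := hc
      rw [mem_sdiff] at hc
      refine ⟨s.filter (fun x => (x.1 = a.1 ∨ x.1 = b.1) ∨ x.1 = c.1),
        filter_subset _ _, ?_, ?_, closed (fun j => (j = a.1 ∨ j = b.1) ∨ j = c.1)⟩
      · -- contains a, b, c, pairwise distinct
        have hsub : ({a, b, c} : Finset (Σ i, V i)) ⊆
            s.filter (fun x => (x.1 = a.1 ∨ x.1 = b.1) ∨ x.1 = c.1) := by
          intro x hx
          simp only [mem_insert, mem_singleton] at hx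
          rcases hx with rfl | rfl | rfl
          · exact mem_filter.mpr ⟨ha, Or.inl (Or.inl rfl)⟩
          · exact mem_filter.mpr ⟨hb.1, Or.inl (Or.inr rfl)⟩
          · exact mem_filter.mpr ⟨hc.1, Or.inr rfl⟩
        have hab : a ≠ b := fun h => hb.2 (h ▸ rfl)
        have hca : c ≠ a := fun h => hc.2 (mem_filter.mpr ⟨hc.1, Or.inl (h ▸ rfl)⟩)
        have hcb : c ≠ b := fun h => hc.2 (mem_filter.mpr ⟨hc.1, Or.inr (h ▸ rfl)⟩)
        have : ({a, b, c} : Finset (Σ i, V i)).card = 3 := by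
          rw [card_insert_of_notMem (by simp [hab, hca.symm]),
            card_insert_of_notMem (by simp [hcb.symm]), card_singleton]
        calc 3 = ({a, b, c} : Finset (Σ i, V i)).card := this.symm
          _ ≤ _ := card_le_card hsub
      · have : (s.filter (fun x => (x.1 = a.1 ∨ x.1 = b.1) ∨ x.1 = c.1)).card ≤
            (s.filter (fun x => x.1 = a.1 ∨ x.1 = b.1)).card +
            (s.filter (fun x => x.1 = c.1)).card := by
          rw [filter_or]; exact card_union_le _ _
        have := hbig c.1
        omega

open Finset in
theorem stmt6 {ι : Type} (V : ι → Type) [∀ i, Fintype (V i)]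
    (hp : ∀ i, Fintype.card (V i) ≤ 4)
    (s : Finset (Σ i, V i)) (hs : 7 ≤ s.card) :
    ¬ IsPlanar ((completeMultipartiteGraph V).induce ↑s) := by
  classical
  obtain ⟨A, hAs, hA3, hA4, hclosed⟩ := exists_split V hp s hs
  have hB3 : 3 ≤ (s \ A).card := by
    rw [card_sdiff_of_subset hAs]; omega
  obtain ⟨A', hA'A, hA'3⟩ := Finset.exists_subset_card_eq hA3
  obtain ⟨B', hB'B, hB'3⟩ := Finset.exists_subset_card_eq hB3
  let eA : Fin 3 ≃ A' := (A'.equivFinOfCardEq hA'3).symm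
  let eB : Fin 3 ≃ B' := (B'.equivFinOfCardEq hB'3).symm
  have hmemA : ∀ k : Fin 3, ((eA k : Σ i, V i)) ∈ s := fun k => hAs (hA'A (eA k).2)
  have hmemB : ∀ k : Fin 3, ((eB k : Σ i, V i)) ∈ s := fun k => (mem_sdiff.mp (hB'B (eB k).2)).1
  let g : Fin 3 ⊕ Fin 3 → (↑s : Set (Σ i, V i)) :=
    Sum.elim (fun k => ⟨(eA k : Σ i, V i), hmemA k⟩) (fun k => ⟨(eB k : Σ i, V i), hmemB k⟩)
  have hcross : ∀ (k l : Fin 3), ((eA k : Σ i, V i)).1 ≠ ((eB l : Σ i, V i)).1 := by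
    intro k l
    have hbB := mem_sdiff.mp (hB'B (eB l).2)
    exact hclosed _ (hA'A (eA k).2) _ hbB.1 hbB.2
  have hginj : Function.Injective g := by
    intro x y h
    cases x with
    | inl k => cases y with
      | inl l =>
        have h' := congrArg Subtype.val h
        exact congrArg Sum.inl (eA.injective (Subtype.ext h'))
      | inr l =>
        exact absurd (congrArg (Sigma.fst ∘ Subtype.val) h) (hcross k l)
    | inr k => cases y with
      | inl l =>
        exact absurd (congrArg (Sigma.fst ∘ Subtype.val) h) (hcross l k).symm
      | inr l =>
        have h' := congrArg Subtype.val h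
        exact congrArg Sum.inr (eB.injective (Subtype.ext h'))
  intro hpl
  apply hpl.2
  apply minor_of_inj g hginj
  intro a b hab
  cases a with
  | inl k => cases b with
    | inl l => simp at hab
    | inr l => exact hcross k l
  | inr k => cases b with
    | inl l => exact (hcross l k).symm
    | inr l => simp at hab
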